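/- Suppose a graph G has a proper coloring with χ(G) color classes V_1, ..., V_{χ(G)} such that for each i, writing V_i = {v_{i,1}, ..., v_{i,n(i)}}, there exists k(i) with N(v_{i,1}) ⊇ ... ⊇ N(v_{i,k(i)}) and N(v_{i,k(i)+1}) ⊆ ... ⊆ N(v_{i,n(i)}). Then box(G) ≤ χ(G). -/
import Mathlib


open SimpleGraph Set

/-- A graph is an interval graph if it is the intersection graph of a family of
closed intervals on the real line. -/
def IsIntervalGraph {V : Type*} (G : SimpleGraph V) : Prop :=
  ∃ lo hi : V → ℝ, ∀ u v : V, u ≠ v →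
    (G.Adj u v ↔ (Set.Icc (lo u) (hi u) ∩ Set.Icc (lo v) (hi v)).Nonempty)

/-- `G` is the intersection graph of a family of boxes in Euclidean `k`-space. -/
def HasBoxRep {V : Type*} (G : SimpleGraph V) (k : ℕ) : Prop :=
  ∃ lo hi : V → Fin k → ℝ, ∀ u v : V, u ≠ v →
    (G.Adj u v ↔ ∀ i, (Set.Icc (lo u i) (hi u i) ∩ Set.Icc (lo v i) (hi v i)).Nonempty)

/-- The boxicity of `G`: the minimum `k` such that `G` is the intersection graph of
a family of boxes in Euclidean `k`-space. -/
noncomputable def boxicity {V : Type*} (G : SimpleGraph V) : ℕ :=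
  sInf {k | HasBoxRep G k}

/-- A set of vertices is independent if no two of its vertices are adjacent. -/
def IsIndepSet' {V : Type*} (G : SimpleGraph V) (s : Set V) : Prop :=
  s.Pairwise fun x y => ¬ G.Adj x y

/-- A graph is chordal if it has no induced cycle of length at least `4`. -/
def IsChordal {V : Type*} (G : SimpleGraph V) : Prop :=
  ∀ n : ℕ, 4 ≤ n → ∀ f : ZMod n → V, Function.Injective f →
    ¬ (∀ i j : ZMod n, G.Adj (f i) (f j) ↔ i = j + 1 ∨ j = i + 1)

/-- `u, v, w` form an asteroidal triple: they are distinct and between any two of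
them there is a path avoiding the neighborhood of the third. -/
def IsAsteroidalTriple {V : Type*} (G : SimpleGraph V) (u v w : V) : Prop :=
  u ≠ v ∧ v ≠ w ∧ u ≠ w ∧
  ∃ (p : G.Walk u v) (q : G.Walk v w) (r : G.Walk w u),
    p.IsPath ∧ q.IsPath ∧ r.IsPath ∧
    (∀ x ∈ p.support, ¬ G.Adj w x) ∧
    (∀ x ∈ q.support, ¬ G.Adj u x) ∧
    (∀ x ∈ r.support, ¬ G.Adj v x)

/-- The circulant graph `G_{a,b}`: vertices `0, …, a-1`, with `u ~ v` iff
`u = v + c (mod a)` for some `b ≤ c ≤ a - b`. -/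
def circG (a b : ℕ) : SimpleGraph (ZMod a) :=
  SimpleGraph.fromRel (fun u v => ∃ c : ℕ, b ≤ c ∧ c ≤ a - b ∧ u = v + (c : ZMod a))

open scoped Classical

noncomputable section AuxBox

variable {V : Type*} (G : SimpleGraph V)

/-- Position of the `j`-th vertex of a class on the real line: the decreasing
chain (indices `≤ kk`) gets positive positions, the increasing chain negative ones. -/
def auxPos (m kk : ℕ) (j : Fin m) : ℝ :=
  if (j : ℕ) ≤ kk then (j : ℝ) + 1 else (j : ℝ) - m

lemma auxPos_pos {m kk : ℕ} {j : Fin m} (h : (j : ℕ) ≤ kk) : 0 < auxPos m kk j := by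
  rw [auxPos, if_pos h]; positivity

lemma auxPos_neg {m kk : ℕ} {j : Fin m} (h : kk < (j : ℕ)) : auxPos m kk j < 0 := by
  rw [auxPos, if_neg (by omega)]
  have : (j : ℝ) < m := by exact_mod_cast j.isLt
  linarith

lemma auxPos_lt_left {m kk : ℕ} {j j' : Fin m} (hj : (j : ℕ) ≤ kk) (hj' : (j' : ℕ) ≤ kk)
    (h : (j' : ℕ) < (j : ℕ)) : auxPos m kk j' < auxPos m kk j := by
  rw [auxPos, auxPos, if_pos hj, if_pos hj']
  have : (j' : ℝ) < (j : ℝ) := by exact_mod_cast h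
  linarith

lemma auxPos_lt_right {m kk : ℕ} {j j' : Fin m} (hj : kk < (j : ℕ)) (hj' : kk < (j' : ℕ))
    (h : (j : ℕ) < (j' : ℕ)) : auxPos m kk j < auxPos m kk j' := by
  rw [auxPos, auxPos, if_neg (by omega), if_neg (by omega)]
  have : (j : ℝ) < (j' : ℝ) := by exact_mod_cast h
  linarith

lemma auxPos_injective (m kk : ℕ) : Function.Injective (auxPos m kk) := by
  intro a b h
  by_cases ha : (a : ℕ) ≤ kk <;> by_cases hb : (b : ℕ) ≤ kk
  · rw [auxPos, auxPos, if_pos ha, if_pos hb] at h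
    have : (a : ℕ) = (b : ℕ) := by exact_mod_cast (by linarith : (a : ℝ) = (b : ℝ))
    exact Fin.ext this
  · have h1 := auxPos_pos ha
    have h2 := auxPos_neg (not_le.mp hb)
    linarith
  · have h1 := auxPos_neg (not_le.mp ha)
    have h2 := auxPos_pos hb
    linarith
  · rw [auxPos, auxPos, if_neg ha, if_neg hb] at h
    have : (a : ℕ) = (b : ℕ) := by exact_mod_cast (by linarith : (a : ℝ) = (b : ℝ))
    exact Fin.ext this

/-- Left endpoint of the interval of `x` in the dimension of a given class. -/
def auxLo (m kk : ℕ) (vv : Fin m → V) (x : V) : ℝ :=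
  if h : ∃ j, vv j = x then auxPos m kk h.choose
  else (insert (0 : ℝ)
      ((Finset.univ.filter fun j : Fin m => kk < (j : ℕ) ∧ G.Adj x (vv j)).image
        (auxPos m kk))).min' (Finset.insert_nonempty _ _)

/-- Right endpoint of the interval of `x` in the dimension of a given class. -/
def auxHi (m kk : ℕ) (vv : Fin m → V) (x : V) : ℝ :=
  if h : ∃ j, vv j = x then auxPos m kk h.choose
  else (insert (0 : ℝ)
      ((Finset.univ.filter fun j : Fin m => (j : ℕ) ≤ kk ∧ G.Adj x (vv j)).image
        (auxPos m kk))).max' (Finset.insert_nonempty _ _)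

lemma auxLo_eq_pos {m kk : ℕ} {vv : Fin m → V} {x : V} {j : Fin m}
    (hinj : Function.Injective vv) (hj : vv j = x) :
    auxLo G m kk vv x = auxPos m kk j := by
  have h : ∃ j, vv j = x := ⟨j, hj⟩
  rw [auxLo, dif_pos h]
  congr 1
  exact hinj (h.choose_spec.trans hj.symm)

lemma auxHi_eq_pos {m kk : ℕ} {vv : Fin m → V} {x : V} {j : Fin m}
    (hinj : Function.Injective vv) (hj : vv j = x) :
    auxHi G m kk vv x = auxPos m kk j := by
  have h : ∃ j, vv j = x := ⟨j, hj⟩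
  rw [auxHi, dif_pos h]
  congr 1
  exact hinj (h.choose_spec.trans hj.symm)

lemma auxLo_nonpos {m kk : ℕ} {vv : Fin m → V} {x : V} (h : ¬∃ j, vv j = x) :
    auxLo G m kk vv x ≤ 0 := by
  rw [auxLo, dif_neg h]
  exact Finset.min'_le _ _ (Finset.mem_insert_self _ _)

lemma auxHi_nonneg {m kk : ℕ} {vv : Fin m → V} {x : V} (h : ¬∃ j, vv j = x) :
    0 ≤ auxHi G m kk vv x := by
  rw [auxHi, dif_neg h]
  exact Finset.le_max' _ _ (Finset.mem_insert_self _ _)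

lemma auxLo_le {m kk : ℕ} {vv : Fin m → V} {x : V} {j : Fin m} (h : ¬∃ j, vv j = x)
    (hk : kk < (j : ℕ)) (ha : G.Adj x (vv j)) : auxLo G m kk vv x ≤ auxPos m kk j := by
  rw [auxLo, dif_neg h]
  exact Finset.min'_le _ _ (Finset.mem_insert_of_mem
    (Finset.mem_image_of_mem _ (by simp [hk, ha])))

lemma auxPos_le_hi {m kk : ℕ} {vv : Fin m → V} {x : V} {j : Fin m} (h : ¬∃ j, vv j = x)
    (hk : (j : ℕ) ≤ kk) (ha : G.Adj x (vv j)) : auxPos m kk j ≤ auxHi G m kk vv x := by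
  rw [auxHi, dif_neg h]
  exact Finset.le_max' _ _ (Finset.mem_insert_of_mem
    (Finset.mem_image_of_mem _ (by simp [hk, ha])))

lemma auxHi_lt {m kk : ℕ} {vv : Fin m → V} {x : V} {j : Fin m} (h : ¬∃ j, vv j = x)
    (hj : (j : ℕ) ≤ kk)
    (hcond : ∀ j' : Fin m, (j' : ℕ) ≤ kk → G.Adj x (vv j') → (j' : ℕ) < (j : ℕ)) :
    auxHi G m kk vv x < auxPos m kk j := by
  rw [auxHi, dif_neg h, Finset.max'_lt_iff]
  intro y hy
  rcases Finset.mem_insert.mp hy with rfl | hy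
  · exact auxPos_pos hj
  · obtain ⟨j', hj', rfl⟩ := Finset.mem_image.mp hy
    obtain ⟨hj'k, hadj⟩ := (Finset.mem_filter.mp hj').2
    exact auxPos_lt_left hj hj'k (hcond j' hj'k hadj)

lemma auxLo_gt {m kk : ℕ} {vv : Fin m → V} {x : V} {j : Fin m} (h : ¬∃ j, vv j = x)
    (hj : kk < (j : ℕ))
    (hcond : ∀ j' : Fin m, kk < (j' : ℕ) → G.Adj x (vv j') → (j : ℕ) < (j' : ℕ)) :
    auxPos m kk j < auxLo G m kk vv x := by
  rw [auxLo, dif_neg h, Finset.lt_min'_iff]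
  intro y hy
  rcases Finset.mem_insert.mp hy with rfl | hy
  · exact auxPos_neg hj
  · obtain ⟨j', hj', rfl⟩ := Finset.mem_image.mp hy
    obtain ⟨hj'k, hadj⟩ := (Finset.mem_filter.mp hj').2
    exact auxPos_lt_right hj hj'k (hcond j' hj'k hadj)

end AuxBox

theorem stmt7 {V : Type*} [Fintype V] (G : SimpleGraph V)
    (c : ℕ) (n : Fin c → ℕ) (v : (i : Fin c) → Fin (n i) → V)
    (hchi : G.chromaticNumber = (c : ℕ∞))
    (hinj : Function.Injective fun p : (i : Fin c) × Fin (n i) => v p.1 p.2)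
    (hcov : ∀ x : V, ∃ i j, v i j = x)
    (hindep : ∀ i, IsIndepSet' G (Set.range (v i)))
    (hchain : ∀ i, ∃ k : Fin (n i),
      (∀ s t : Fin (n i), s ≤ t → t ≤ k →
        G.neighborSet (v i t) ⊆ G.neighborSet (v i s)) ∧
      (∀ s t : Fin (n i), k < s → s ≤ t →
        G.neighborSet (v i s) ⊆ G.neighborSet (v i t))) :
    boxicity G ≤ c := by
  classical
  have hvinj : ∀ i : Fin c, Function.Injective (v i) := by
    intro i a b h
    have h2 : (⟨i, a⟩ : (i : Fin c) × Fin (n i)) = ⟨i, b⟩ := hinj h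
    exact eq_of_heq (Sigma.mk.inj_iff.mp h2).2
  choose k hdown hup using hchain
  have hbox : HasBoxRep G c := by
    refine ⟨fun x i => auxLo G (n i) (k i : ℕ) (v i) x,
            fun x i => auxHi G (n i) (k i : ℕ) (v i) x, ?_⟩
    intro u w huw
    beta_reduce
    constructor
    · intro hadj i
      by_cases hu : ∃ j, v i j = u <;> by_cases hw : ∃ j, v i j = w
      · exfalso
        obtain ⟨j, hj⟩ := hu
        obtain ⟨j', hj'⟩ := hw
        exact hindep i ⟨j, hj⟩ ⟨j', hj'⟩ huw hadj
      · obtain ⟨j, hj⟩ := hu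
        rw [Set.nonempty_def]
        refine ⟨auxPos (n i) (k i : ℕ) j, ?_, ?_⟩
        · rw [Set.mem_Icc, auxLo_eq_pos G (hvinj i) hj, auxHi_eq_pos G (hvinj i) hj]
          exact ⟨le_refl _, le_refl _⟩
        · have hadjw : G.Adj w (v i j) := by rw [hj]; exact hadj.symm
          rw [Set.mem_Icc]
          by_cases hjk : (j : ℕ) ≤ (k i : ℕ)
          · exact ⟨le_trans (auxLo_nonpos G hw) (auxPos_pos hjk).le,
              auxPos_le_hi G hw hjk hadjw⟩
          · exact ⟨auxLo_le G hw (not_le.mp hjk) hadjw,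
              le_trans (auxPos_neg (not_le.mp hjk)).le (auxHi_nonneg G hw)⟩
      · obtain ⟨j, hj⟩ := hw
        rw [Set.nonempty_def]
        refine ⟨auxPos (n i) (k i : ℕ) j, ?_, ?_⟩
        · have hadju : G.Adj u (v i j) := by rw [hj]; exact hadj
          rw [Set.mem_Icc]
          by_cases hjk : (j : ℕ) ≤ (k i : ℕ)
          · exact ⟨le_trans (auxLo_nonpos G hu) (auxPos_pos hjk).le,
              auxPos_le_hi G hu hjk hadju⟩
          · exact ⟨auxLo_le G hu (not_le.mp hjk) hadju,
              le_trans (auxPos_neg (not_le.mp hjk)).le (auxHi_nonneg G hu)⟩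
        · rw [Set.mem_Icc, auxLo_eq_pos G (hvinj i) hj, auxHi_eq_pos G (hvinj i) hj]
          exact ⟨le_refl _, le_refl _⟩
      · exact ⟨0, Set.mem_Icc.mpr ⟨auxLo_nonpos G hu, auxHi_nonneg G hu⟩,
          Set.mem_Icc.mpr ⟨auxLo_nonpos G hw, auxHi_nonneg G hw⟩⟩
    · intro hall
      by_contra hnadj
      obtain ⟨i, j, hj⟩ := hcov u
      obtain ⟨x, hxu, hxw⟩ := hall i
      beta_reduce at hxu hxw
      rw [Set.mem_Icc, auxLo_eq_pos G (hvinj i) hj, auxHi_eq_pos G (hvinj i) hj] at hxu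
      have hx : x = auxPos (n i) (k i : ℕ) j := le_antisymm hxu.2 hxu.1
      subst hx
      rw [Set.mem_Icc] at hxw
      by_cases hw : ∃ j', v i j' = w
      · obtain ⟨j', hj'⟩ := hw
        rw [auxLo_eq_pos G (hvinj i) hj'] at hxw
        rw [auxHi_eq_pos G (hvinj i) hj'] at hxw
        have hjj : j = j' := auxPos_injective _ _ (le_antisymm hxw.2 hxw.1)
        exact huw (by rw [← hj, ← hj', hjj])
      · by_cases hjk : (j : ℕ) ≤ (k i : ℕ)
        · have hlt : auxHi G (n i) (k i : ℕ) (v i) w < auxPos (n i) (k i : ℕ) j := by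
            apply auxHi_lt G hw hjk
            intro j' hj'k hadj
            by_contra hge
            have hle : j ≤ j' := Fin.le_def.mpr (by omega)
            have hsub := hdown i j j' hle (Fin.le_def.mpr hj'k)
            have hmem : w ∈ G.neighborSet (v i j') :=
              (SimpleGraph.mem_neighborSet _ _ _).mpr hadj.symm
            have : G.Adj (v i j) w := (SimpleGraph.mem_neighborSet _ _ _).mp (hsub hmem)
            rw [hj] at this
            exact hnadj this
          linarith [hxw.2]
        · have hlt : auxPos (n i) (k i : ℕ) j < auxLo G (n i) (k i : ℕ) (v i) w := by
            apply auxLo_gt G hw (not_le.mp hjk)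
            intro j' hj'k hadj
            by_contra hge
            have hle : j' ≤ j := Fin.le_def.mpr (by omega)
            have hsub := hup i j' j (Fin.lt_def.mpr hj'k) hle
            have hmem : w ∈ G.neighborSet (v i j') :=
              (SimpleGraph.mem_neighborSet _ _ _).mpr hadj.symm
            have : G.Adj (v i j) w := (SimpleGraph.mem_neighborSet _ _ _).mp (hsub hmem)
            rw [hj] at this
            exact hnadj this
          linarith [hxw.1]
  exact Nat.sInf_le hbox
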